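/- For every finite poset P and fixed t ≥ 2, either sat*([t]^n, P) = O(1) or sat*([t]^n, P) = Ω(√n) as n → ∞. -/

import Mathlib

open Filter

/-- An induced copy of the poset `P` inside the family `F`. -/
def InducedCopy (P : Type) [PartialOrder P] {α : Type} [PartialOrder α]
    (F : Set α) : Prop :=
  ∃ φ : P → α, Function.Injective φ ∧ (∀ x, φ x ∈ F) ∧ ∀ x y, φ x ≤ φ y ↔ x ≤ y

/-- `F` is induced `P`-free. -/
def PFree (P : Type) [PartialOrder P] {α : Type} [PartialOrder α] (F : Set α) : Prop :=
  ¬ InducedCopy P F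

/-- `F` is induced `P`-free and induced `P`-saturated. -/
def PSaturated (P : Type) [PartialOrder P] {α : Type} [PartialOrder α] (F : Set α) : Prop :=
  PFree P F ∧ ∀ g ∉ F, InducedCopy P (insert g F)

/-- The lifting operator `L_i`, copying coordinate `i` into a new last coordinate. -/
def lift {t n : ℕ} (i : Fin n) (f : Fin n → Fin t) : Fin (n + 1) → Fin t :=
  Fin.snoc f (f i)

/-- The coordinate-dropping operator `D_i`. -/
def drop {t n : ℕ} (i : Fin (n + 1)) (f : Fin (n + 1) → Fin t) : Fin n → Fin t :=
  fun x => f (i.succAbove x)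

/-- Coordinate `i` is separating for `F`. -/
def Separating {t n : ℕ} (F : Set (Fin n → Fin t)) (i : Fin n) : Prop :=
  ∃ f ∈ F, ∃ f' ∈ F, f ≠ f' ∧ (∀ x, x ≠ i → f x ≤ f' x) ∧ f' i < f i

/-- The induced saturation number `sat*([t]^n, P)`. -/
noncomputable def satStar (t n : ℕ) (P : Type) [PartialOrder P] : ℕ :=
  sInf {m | ∃ F : Set (Fin n → Fin t), PSaturated P F ∧ F.ncard = m}

/-- The antichain on `k` elements. -/
def AC (k : ℕ) := Fin k

instance (k : ℕ) : PartialOrder (AC k) where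
  le := Eq
  le_refl _ := rfl
  le_trans _ _ _ h h' := Eq.trans h h'
  le_antisymm _ _ h _ := h

/-- The unique cover twin property. -/
def UCTP (P : Type) [PartialOrder P] : Prop :=
  ∀ x y : P, y ⋖ x → ∃ y', y' ≠ y ∧ y' ≠ x ∧ y' ⋖ x


namespace Stmt13Aux

/-- Transport of induced copies along a relation-preserving injection. -/
theorem copy_map {P : Type} [PartialOrder P] {α β : Type} [PartialOrder α]
    [PartialOrder β] {F : Set α} {G : Set β} (Θ : α → β)
    (hmap : ∀ u ∈ F, Θ u ∈ G) (hinj : Set.InjOn Θ F)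
    (hiff : ∀ u ∈ F, ∀ v ∈ F, (Θ u ≤ Θ v ↔ u ≤ v)) :
    InducedCopy P F → InducedCopy P G := by
  rintro ⟨φ, hi, hm, ho⟩
  exact ⟨Θ ∘ φ, fun x y hxy => hi (hinj (hm x) (hm y) hxy),
    fun x => hmap _ (hm x), fun x y => (hiff _ (hm x) _ (hm y)).trans (ho x y)⟩

/-- rounding a value of `Fin t` to `{0, t-1}`. -/
def rhoF {t : ℕ} (v : Fin t) : Fin t :=
  if v.val + 1 = t then v else ⟨0, Nat.lt_of_le_of_lt (Nat.zero_le _) v.isLt⟩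

lemma rhoF_val {t : ℕ} (v : Fin t) : (rhoF v).val = if v.val + 1 = t then v.val else 0 := by
  unfold rhoF; split <;> rfl

lemma rhoF_mono {t : ℕ} {a b : Fin t} (h : a ≤ b) : rhoF a ≤ rhoF b := by
  have ha := a.isLt; have hb := b.isLt
  simp only [Fin.le_def] at h ⊢
  rw [rhoF_val, rhoF_val]
  split <;> split <;> omega

lemma finValMax {t : ℕ} (a b : Fin t) : (max a b).val = max a.val b.val := by
  rcases le_total a b with h | h
  · rw [max_eq_right h, max_eq_right (Fin.le_def.mp h)]
  · rw [max_eq_left h, max_eq_left (Fin.le_def.mp h)]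

lemma finValMin {t : ℕ} (a b : Fin t) : (min a b).val = min a.val b.val := by
  rcases le_total a b with h | h
  · rw [min_eq_left h, min_eq_left (Fin.le_def.mp h)]
  · rw [min_eq_right h, min_eq_right (Fin.le_def.mp h)]

section
variable {t n : ℕ} {F : Set (Fin n → Fin t)} {i : Fin n}

lemma keyMono (hns : ¬ Separating F i) {f f' : Fin n → Fin t} (hf : f ∈ F) (hf' : f' ∈ F)
    (hle : ∀ x, x ≠ i → f x ≤ f' x) : f i ≤ f' i := by
  by_cases h : f = f'
  · subst h; exact le_refl _
  · by_contra hlt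
    exact hns ⟨f, hf, f', hf', h, hle, lt_of_not_ge hlt⟩

lemma le_update_iff' {g : Fin n → Fin t} {c : Fin t} {f : Fin n → Fin t} :
    Function.update g i c ≤ f ↔ (∀ x, x ≠ i → g x ≤ f x) ∧ c ≤ f i := by
  constructor
  · intro h
    refine ⟨fun x hx => ?_, ?_⟩
    · have := h x; rwa [Function.update_of_ne hx] at this
    · have := h i; rwa [Function.update_self] at this
  · rintro ⟨h1, h2⟩ x
    by_cases hx : x = i
    · subst hx; rwa [Function.update_self]
    · rw [Function.update_of_ne hx]; exact h1 x hx

lemma update_le_iff' {g : Fin n → Fin t} {c : Fin t} {f : Fin n → Fin t} :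
    f ≤ Function.update g i c ↔ (∀ x, x ≠ i → f x ≤ g x) ∧ f i ≤ c := by
  constructor
  · intro h
    refine ⟨fun x hx => ?_, ?_⟩
    · have := h x; rwa [Function.update_of_ne hx] at this
    · have := h i; rwa [Function.update_self] at this
  · rintro ⟨h1, h2⟩ x
    by_cases hx : x = i
    · subst hx; rwa [Function.update_self]
    · rw [Function.update_of_ne hx]; exact h1 x hx

lemma exists_c (ht : 2 ≤ t) (hns : ¬ Separating F i) (g : Fin n → Fin t) :
    ∃ c : Fin t,
      (∀ f ∈ F, (∀ x, x ≠ i → g x ≤ f x) → (c ≤ f i ↔ g i ≤ rhoF (f i)))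
    ∧ (∀ f ∈ F, (∀ x, x ≠ i → f x ≤ g x) → (f i ≤ c ↔ rhoF (f i) ≤ g i)) := by
  classical
  by_cases hw2 : (g i).val + 1 = t
  · refine ⟨⟨t-1, by omega⟩, fun f hf _ => ?_, fun f hf _ => ?_⟩
    · have hlt := (f i).isLt
      simp only [Fin.le_def, rhoF_val]
      split <;> omega
    · have hlt := (f i).isLt
      simp only [Fin.le_def, rhoF_val]
      split <;> omega
  · by_cases hw0 : (g i).val = 0
    · set q : Fin t → ℕ :=
        (fun v : Fin t => if (v.val + 1 ≠ t ∧ ∃ f ∈ F, (∀ x, x ≠ i → f x ≤ g x) ∧ f i = v)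
          then v.val else 0) with hq
      have h2 : Finset.sup Finset.univ q ≤ t - 2 := by
        apply Finset.sup_le
        intro v _
        show (if (v.val + 1 ≠ t ∧ ∃ f ∈ F, (∀ x, x ≠ i → f x ≤ g x) ∧ f i = v)
          then v.val else 0) ≤ t - 2
        split
        · next h => have := v.isLt; omega
        · omega
      refine ⟨⟨Finset.sup Finset.univ q, by omega⟩, fun f hf ha => ?_, fun f hf hb => ?_⟩
      · have h1 : Finset.sup Finset.univ q ≤ (f i).val := by
          apply Finset.sup_le
          intro v _
          show (if (v.val + 1 ≠ t ∧ ∃ f ∈ F, (∀ x, x ≠ i → f x ≤ g x) ∧ f i = v)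
            then v.val else 0) ≤ (f i).val
          split
          · next h =>
            obtain ⟨hv, f', hf', hb', hfi⟩ := h
            have := keyMono hns hf' hf (fun x hx => le_trans (hb' x hx) (ha x hx))
            simp only [Fin.le_def, hfi] at this
            exact this
          · omega
        simp only [Fin.le_def, rhoF_val]
        split <;> omega
      · constructor
        · intro hle
          simp only [Fin.le_def] at hle
          have hne : (f i).val + 1 ≠ t := by omega
          simp only [Fin.le_def, rhoF_val, if_neg hne]
          omega
        · intro hle
          simp only [Fin.le_def, rhoF_val] at hle
          have hne : (f i).val + 1 ≠ t := by split at hle <;> omega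
          have h := Finset.le_sup (f := q) (Finset.mem_univ (f i))
          have h3 : q (f i) = (f i).val := by
            simp only [hq]
            exact if_pos ⟨hne, f, hf, hb, rfl⟩
          rw [h3] at h
          simp only [Fin.le_def]
          exact h
    · by_cases hD : ∃ f ∈ F, (∀ x, x ≠ i → f x ≤ g x) ∧ (f i).val + 1 = t
      · refine ⟨⟨t-2, by omega⟩, fun f hf ha => ?_, fun f hf _ => ?_⟩
        · have hlt := (f i).isLt
          have hwlt := (g i).isLt
          have hnot : (f i).val + 1 = t ∨ (f i).val ≠ t - 2 := by
            by_cases hcase : (f i).val + 1 = t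
            · left; exact hcase
            · right
              intro heq
              obtain ⟨fd, hfd, hfdb, hfdv⟩ := hD
              have := keyMono hns hfd hf (fun x hx => le_trans (hfdb x hx) (ha x hx))
              simp only [Fin.le_def] at this
              omega
          simp only [Fin.le_def, rhoF_val]
          split <;> omega
        · have hlt := (f i).isLt
          have hwlt := (g i).isLt
          simp only [Fin.le_def, rhoF_val]
          split <;> omega
      · refine ⟨⟨t-1, by omega⟩, fun f hf _ => ?_, fun f hf hb => ?_⟩
        · have hlt := (f i).isLt
          have hwlt := (g i).isLt
          simp only [Fin.le_def, rhoF_val]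
          split <;> omega
        · have hlt := (f i).isLt
          have hne : (f i).val + 1 ≠ t := fun h => hD ⟨f, hf, hb, h⟩
          simp only [Fin.le_def, rhoF_val, if_neg hne]
          omega
lemma round_lemma (ht : 2 ≤ t) (P : Type) [PartialOrder P]
    (hsat : PSaturated P F) (hns : ¬ Separating F i) :
    ∃ G : Set (Fin n → Fin t), PSaturated P G ∧ ¬ Separating G i ∧
      (∀ u ∈ G, (u i).val = 0 ∨ (u i).val + 1 = t) ∧ G.ncard = F.ncard := by
  classical
  set θ : (Fin n → Fin t) → (Fin n → Fin t) :=
    fun f => Function.update f i (rhoF (f i)) with hθ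
  have hθoff : ∀ (f : Fin n → Fin t) (x : Fin n), x ≠ i → θ f x = f x := by
    intro f x hx; simp only [hθ]; rw [Function.update_of_ne hx]
  have hθi : ∀ f : Fin n → Fin t, θ f i = rhoF (f i) := by
    intro f; simp only [hθ]; rw [Function.update_self]
  have hmono : ∀ f ∈ F, ∀ f' ∈ F, (θ f ≤ θ f' ↔ f ≤ f') := by
    intro f hf f' hf'
    constructor
    · intro h
      have hoff : ∀ x, x ≠ i → f x ≤ f' x := by
        intro x hx
        have := h x
        rwa [hθoff f x hx, hθoff f' x hx] at this
      have hi := keyMono hns hf hf' hoff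
      intro x
      by_cases hx : x = i
      · subst hx; exact hi
      · exact hoff x hx
    · intro h x
      by_cases hx : x = i
      · subst hx; rw [hθi, hθi]; exact rhoF_mono (h x)
      · rw [hθoff f x hx, hθoff f' x hx]; exact h x
  have hinjOn : Set.InjOn θ F := by
    intro f hf f' hf' he
    exact le_antisymm ((hmono f hf f' hf').1 he.le) ((hmono f' hf' f hf).1 he.ge)
  refine ⟨θ '' F, ⟨?_, ?_⟩, ?_, ?_, Set.ncard_image_of_injOn hinjOn⟩
  · -- PFree
    intro hcopy
    haveI : Nonempty (Fin n → Fin t) := ⟨fun _ => ⟨0, by omega⟩⟩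
    apply hsat.1
    refine copy_map (Function.invFunOn θ F) ?_ ?_ ?_ hcopy
    · rintro u ⟨f, hf, rfl⟩
      exact Function.invFunOn_mem (f := θ) ⟨f, hf, rfl⟩
    · rintro u ⟨f, hf, rfl⟩ v ⟨f', hf', rfl⟩ he
      rw [← Function.invFunOn_eq (f := θ) ⟨f, hf, rfl⟩,
        ← Function.invFunOn_eq (f := θ) ⟨f', hf', rfl⟩, he]
    · rintro u ⟨f, hf, rfl⟩ v ⟨f', hf', rfl⟩
      have h1 := Function.invFunOn_mem (f := θ) ⟨f, hf, rfl⟩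
      have h2 := Function.invFunOn_mem (f := θ) ⟨f', hf', rfl⟩
      have e1 := Function.invFunOn_eq (f := θ) ⟨f, hf, rfl⟩
      have e2 := Function.invFunOn_eq (f := θ) ⟨f', hf', rfl⟩
      rw [← hmono _ h1 _ h2, e1, e2]
  · -- saturation
    intro g hg
    obtain ⟨c, hA, hB⟩ := exists_c ht hns g
    set p : Fin n → Fin t := Function.update g i c with hp
    have hup : ∀ f ∈ F, (g ≤ θ f ↔ p ≤ f) := by
      intro f hf
      rw [hθ, hp, update_le_iff', le_update_iff']
      constructor
      · rintro ⟨h1, h2⟩; exact ⟨h1, (hA f hf h1).2 h2⟩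
      · rintro ⟨h1, h2⟩; exact ⟨h1, (hA f hf h1).1 h2⟩
    have hdn : ∀ f ∈ F, (θ f ≤ g ↔ f ≤ p) := by
      intro f hf
      rw [hθ, hp, update_le_iff', le_update_iff']
      constructor
      · rintro ⟨h1, h2⟩; exact ⟨h1, (hB f hf h1).2 h2⟩
      · rintro ⟨h1, h2⟩; exact ⟨h1, (hB f hf h1).1 h2⟩
    have hpF : p ∉ F := by
      intro hpmem
      have h1 : g ≤ θ p := (hup p hpmem).2 (le_refl p)
      have h2 : θ p ≤ g := (hdn p hpmem).2 (le_refl p)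
      exact hg ⟨p, hpmem, (le_antisymm h1 h2).symm⟩
    have copy := hsat.2 p hpF
    have hval : ∀ u : Fin n → Fin t,
        (fun u => if u = p then g else θ u) u = if u = p then g else θ u := fun _ => rfl
    have hvp : (fun u => if u = p then g else θ u) p = g := by rw [hval, if_pos rfl]
    have hvf : ∀ u ∈ F, (fun u => if u = p then g else θ u) u = θ u := by
      intro u hu
      rw [hval, if_neg (show u ≠ p from fun e => hpF (e ▸ hu))]
    refine copy_map (fun u => if u = p then g else θ u) ?_ ?_ ?_ copy
    · intro u hu
      rcases Set.mem_insert_iff.1 hu with h | h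
      · subst h; rw [if_pos rfl]; exact Set.mem_insert _ _
      · rw [if_neg (show u ≠ p from fun e => hpF (e ▸ h))]
        exact Set.mem_insert_of_mem _ ⟨u, h, rfl⟩
    · intro u hu v hv he
      rcases Set.mem_insert_iff.1 hu with h1 | h1 <;> rcases Set.mem_insert_iff.1 hv with h2 | h2
      · rw [h1, h2]
      · subst h1
        rw [hvp, hvf v h2] at he
        exact absurd ⟨v, h2, he.symm⟩ hg
      · subst h2
        rw [hvp, hvf u h1] at he
        exact absurd ⟨u, h1, he⟩ hg
      · rw [hvf u h1, hvf v h2] at he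
        exact hinjOn h1 h2 he
    · intro u hu v hv
      rcases Set.mem_insert_iff.1 hu with h1 | h1 <;> rcases Set.mem_insert_iff.1 hv with h2 | h2
      · subst h1; subst h2; simp
      · subst h1
        rw [if_pos rfl, if_neg (show v ≠ p from fun e => hpF (e ▸ h2))]
        exact hup v h2
      · subst h2
        rw [if_pos rfl, if_neg (show u ≠ p from fun e => hpF (e ▸ h1))]
        exact hdn u h1
      · rw [if_neg (show u ≠ p from fun e => hpF (e ▸ h1)), if_neg (show v ≠ p from fun e => hpF (e ▸ h2))]
        exact hmono u h1 v h2
  · -- non separating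
    rintro ⟨u, ⟨f, hf, rfl⟩, u', ⟨f', hf', rfl⟩, hne, hoff, hlt⟩
    have hoff' : ∀ x, x ≠ i → f x ≤ f' x := by
      intro x hx
      have := hoff x hx
      rwa [hθoff f x hx, hθoff f' x hx] at this
    have := rhoF_mono (keyMono hns hf hf' hoff')
    rw [← hθi f, ← hθi f'] at this
    exact absurd hlt (not_lt.2 this)
  · -- binary
    rintro u ⟨f, hf, rfl⟩
    rw [hθi f, rhoF_val]
    split
    · next h => right; exact h
    · left; rfl


lemma lift_le_lift {f f' : Fin n → Fin t} : lift i f ≤ lift i f' ↔ f ≤ f' := by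
  constructor
  · intro h x
    have := h x.castSucc
    simpa [lift, Fin.snoc_castSucc] using this
  · intro h y
    cases y using Fin.lastCases with
    | last => simpa [lift, Fin.snoc_last] using h i
    | cast x => simpa [lift, Fin.snoc_castSucc] using h x

lemma lift_inj : Function.Injective (lift (t := t) i) := by
  intro f f' he
  funext x
  have := congrFun he x.castSucc
  simpa [lift, Fin.snoc_castSucc] using this

lemma drop_last_lift (f : Fin n → Fin t) : drop (Fin.last n) (lift i f) = f := by
  funext x
  simp [drop, Fin.succAbove_last_apply, lift, Fin.snoc_castSucc]

lemma le_lift_iff {g : Fin (n+1) → Fin t} {f : Fin n → Fin t} :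
    g ≤ lift i f ↔ (∀ x, x ≠ i → g x.castSucc ≤ f x)
      ∧ max (g i.castSucc) (g (Fin.last n)) ≤ f i := by
  rw [max_le_iff]
  constructor
  · intro h
    refine ⟨fun x _ => ?_, ?_, ?_⟩
    · simpa [lift, Fin.snoc_castSucc] using h x.castSucc
    · simpa [lift, Fin.snoc_castSucc] using h i.castSucc
    · simpa [lift, Fin.snoc_last] using h (Fin.last n)
  · rintro ⟨h1, h2, h3⟩ y
    cases y using Fin.lastCases with
    | last => simpa [lift, Fin.snoc_last] using h3
    | cast x =>
      by_cases hx : x = i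
      · subst hx; simpa [lift, Fin.snoc_castSucc] using h2
      · simpa [lift, Fin.snoc_castSucc] using h1 x hx

lemma lift_le_iff {g : Fin (n+1) → Fin t} {f : Fin n → Fin t} :
    lift i f ≤ g ↔ (∀ x, x ≠ i → f x ≤ g x.castSucc)
      ∧ f i ≤ min (g i.castSucc) (g (Fin.last n)) := by
  rw [le_min_iff]
  constructor
  · intro h
    refine ⟨fun x _ => ?_, ?_, ?_⟩
    · simpa [lift, Fin.snoc_castSucc] using h x.castSucc
    · simpa [lift, Fin.snoc_castSucc] using h i.castSucc
    · simpa [lift, Fin.snoc_last] using h (Fin.last n)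
  · rintro ⟨h1, h2, h3⟩ y
    cases y using Fin.lastCases with
    | last => simpa [lift, Fin.snoc_last] using h3
    | cast x =>
      by_cases hx : x = i
      · subst hx; simpa [lift, Fin.snoc_castSucc] using h2
      · simpa [lift, Fin.snoc_castSucc] using h1 x hx

lemma lift_lemma (ht : 2 ≤ t) (P : Type) [PartialOrder P]
    (hsat : PSaturated P F) (hns : ¬ Separating F i)
    (hbin : ∀ f ∈ F, (f i).val = 0 ∨ (f i).val + 1 = t) :
    PSaturated P (lift i '' F) ∧ ¬ Separating (lift i '' F) (Fin.last n) ∧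
      (∀ u ∈ lift i '' F, (u (Fin.last n)).val = 0 ∨ (u (Fin.last n)).val + 1 = t) ∧
      (lift i '' F).ncard = F.ncard := by
  classical
  refine ⟨⟨?_, ?_⟩, ?_, ?_, Set.ncard_image_of_injective _ lift_inj⟩
  · -- PFree
    intro hcopy
    apply hsat.1
    refine copy_map (drop (Fin.last n)) ?_ ?_ ?_ hcopy
    · rintro u ⟨f, hf, rfl⟩
      rw [drop_last_lift]; exact hf
    · rintro u ⟨f, hf, rfl⟩ v ⟨f', hf', rfl⟩ he
      rw [drop_last_lift, drop_last_lift] at he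
      rw [he]
    · rintro u ⟨f, hf, rfl⟩ v ⟨f', hf', rfl⟩
      rw [drop_last_lift, drop_last_lift]
      exact lift_le_lift.symm
  · -- saturation
    intro g hg
    by_cases hcase : g (Fin.last n) = g i.castSucc
    · -- g is itself a lift
      have hgl : lift i (drop (Fin.last n) g) = g := by
        funext y
        cases y using Fin.lastCases with
        | last =>
          simp only [lift, Fin.snoc_last, drop, Fin.succAbove_last_apply]
          exact hcase.symm
        | cast x =>
          simp [lift, Fin.snoc_castSucc, drop, Fin.succAbove_last_apply]
      have h0F : drop (Fin.last n) g ∉ F := fun h => hg ⟨_, h, hgl⟩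
      have copy := hsat.2 _ h0F
      refine copy_map (lift i) ?_ (lift_inj.injOn) ?_ copy
      · intro u hu
        rcases Set.mem_insert_iff.1 hu with h | h
        · subst h; rw [hgl]; exact Set.mem_insert _ _
        · exact Set.mem_insert_of_mem _ ⟨u, h, rfl⟩
      · intro u _ v _; exact lift_le_lift
    · -- genuine new point
      have hab : g i.castSucc ≠ g (Fin.last n) := fun e => hcase e.symm
      have hMv : (max (g i.castSucc) (g (Fin.last n))).val
          = max (g i.castSucc).val (g (Fin.last n)).val := finValMax _ _
      have hmv : (min (g i.castSucc) (g (Fin.last n))).val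
          = min (g i.castSucc).val (g (Fin.last n)).val := finValMin _ _
      have hane : (g i.castSucc).val ≠ (g (Fin.last n)).val :=
        fun e => hab (Fin.ext e)
      have halt := (g i.castSucc).isLt
      have hblt := (g (Fin.last n)).isLt
      -- choice of c
      by_cases hE : ∃ f ∈ F, (∀ x, x ≠ i → g x.castSucc ≤ f x) ∧ (f i).val = 0
      · -- c = t-1
        set z : Fin n → Fin t :=
          Function.update (fun x => g x.castSucc) i ⟨t-1, by omega⟩ with hz
        have hup : ∀ f ∈ F, (z ≤ f ↔ g ≤ lift i f) := by
          intro f hf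
          rw [hz, le_update_iff', le_lift_iff]
          apply and_congr_right
          intro hoff
          rcases hbin f hf with h0 | h1
          · simp only [Fin.le_def, hMv]
            omega
          · simp only [Fin.le_def, hMv]
            omega
        have hdn : ∀ f ∈ F, (f ≤ z ↔ lift i f ≤ g) := by
          intro f hf
          rw [hz, update_le_iff', lift_le_iff]
          apply and_congr_right
          intro hoff
          rcases hbin f hf with h0 | h1
          · simp only [Fin.le_def, hmv]
            omega
          · -- f i = t-1 below g : contradiction with hE via separation
            obtain ⟨fe, hfe, hfeoff, hfev⟩ := hE
            exfalso
            apply hns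
            refine ⟨f, hf, fe, hfe, ?_, fun x hx => le_trans (hoff x hx) (hfeoff x hx), ?_⟩
            · intro e
              rw [e] at h1
              omega
            · simp only [Fin.lt_def]
              omega
        -- z not in F
        have hzF : z ∉ F := by
          intro hzm
          have h1 : g ≤ lift i z := (hup z hzm).1 (le_refl z)
          have h2 : lift i z ≤ g := (hdn z hzm).1 (le_refl z)
          exact hg ⟨z, hzm, le_antisymm h2 h1⟩
        have copy := hsat.2 z hzF
        have hval : ∀ u : Fin n → Fin t,
            (fun u => if u = z then g else lift i u) u = if u = z then g else lift i u :=
          fun _ => rfl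
        have hvz : (fun u => if u = z then g else lift i u) z = g := by rw [hval, if_pos rfl]
        have hvf : ∀ u ∈ F, (fun u => if u = z then g else lift i u) u = lift i u := by
          intro u hu
          rw [hval, if_neg (show u ≠ z from fun e => hzF (e ▸ hu))]
        refine copy_map (fun u => if u = z then g else lift i u) ?_ ?_ ?_ copy
        · intro u hu
          rcases Set.mem_insert_iff.1 hu with h | h
          · subst h; rw [if_pos rfl]; exact Set.mem_insert _ _
          · rw [if_neg (show u ≠ z from fun e => hzF (e ▸ h))]; exact Set.mem_insert_of_mem _ ⟨u, h, rfl⟩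
        · intro u hu v hv he
          rcases Set.mem_insert_iff.1 hu with h1 | h1 <;>
            rcases Set.mem_insert_iff.1 hv with h2 | h2
          · rw [h1, h2]
          · subst h1; rw [hvz, hvf v h2] at he; exact absurd ⟨v, h2, he.symm⟩ hg
          · subst h2; rw [hvz, hvf u h1] at he; exact absurd ⟨u, h1, he⟩ hg
          · rw [hvf u h1, hvf v h2] at he; exact lift_inj he
        · intro u hu v hv
          rcases Set.mem_insert_iff.1 hu with h1 | h1 <;>
            rcases Set.mem_insert_iff.1 hv with h2 | h2
          · subst h1; subst h2; simp
          · subst h1; rw [if_pos rfl, if_neg (show v ≠ z from fun e => hzF (e ▸ h2))]; exact (hup v h2).symm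
          · subst h2; rw [if_pos rfl, if_neg (show u ≠ z from fun e => hzF (e ▸ h1))]; exact (hdn u h1).symm
          · rw [if_neg (show u ≠ z from fun e => hzF (e ▸ h1)), if_neg (show v ≠ z from fun e => hzF (e ▸ h2))]; exact lift_le_lift
      · -- c = 0
        set z : Fin n → Fin t :=
          Function.update (fun x => g x.castSucc) i ⟨0, by omega⟩ with hz
        have hup : ∀ f ∈ F, (z ≤ f ↔ g ≤ lift i f) := by
          intro f hf
          rw [hz, le_update_iff', le_lift_iff]
          apply and_congr_right
          intro hoff
          rcases hbin f hf with h0 | h1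
          · exact absurd ⟨f, hf, hoff, h0⟩ hE
          · simp only [Fin.le_def, hMv]
            omega
        have hdn : ∀ f ∈ F, (f ≤ z ↔ lift i f ≤ g) := by
          intro f hf
          rw [hz, update_le_iff', lift_le_iff]
          apply and_congr_right
          intro hoff
          rcases hbin f hf with h0 | h1
          · simp only [Fin.le_def, hmv]
            omega
          · simp only [Fin.le_def, hmv]
            omega
        have hzF : z ∉ F := by
          intro hzm
          have h1 : g ≤ lift i z := (hup z hzm).1 (le_refl z)
          have h2 : lift i z ≤ g := (hdn z hzm).1 (le_refl z)
          exact hg ⟨z, hzm, le_antisymm h2 h1⟩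
        have copy := hsat.2 z hzF
        have hval : ∀ u : Fin n → Fin t,
            (fun u => if u = z then g else lift i u) u = if u = z then g else lift i u :=
          fun _ => rfl
        have hvz : (fun u => if u = z then g else lift i u) z = g := by rw [hval, if_pos rfl]
        have hvf : ∀ u ∈ F, (fun u => if u = z then g else lift i u) u = lift i u := by
          intro u hu
          rw [hval, if_neg (show u ≠ z from fun e => hzF (e ▸ hu))]
        refine copy_map (fun u => if u = z then g else lift i u) ?_ ?_ ?_ copy
        · intro u hu
          rcases Set.mem_insert_iff.1 hu with h | h
          · subst h; rw [if_pos rfl]; exact Set.mem_insert _ _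
          · rw [if_neg (show u ≠ z from fun e => hzF (e ▸ h))]; exact Set.mem_insert_of_mem _ ⟨u, h, rfl⟩
        · intro u hu v hv he
          rcases Set.mem_insert_iff.1 hu with h1 | h1 <;>
            rcases Set.mem_insert_iff.1 hv with h2 | h2
          · rw [h1, h2]
          · subst h1; rw [hvz, hvf v h2] at he; exact absurd ⟨v, h2, he.symm⟩ hg
          · subst h2; rw [hvz, hvf u h1] at he; exact absurd ⟨u, h1, he⟩ hg
          · rw [hvf u h1, hvf v h2] at he; exact lift_inj he
        · intro u hu v hv
          rcases Set.mem_insert_iff.1 hu with h1 | h1 <;>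
            rcases Set.mem_insert_iff.1 hv with h2 | h2
          · subst h1; subst h2; simp
          · subst h1; rw [if_pos rfl, if_neg (show v ≠ z from fun e => hzF (e ▸ h2))]; exact (hup v h2).symm
          · subst h2; rw [if_pos rfl, if_neg (show u ≠ z from fun e => hzF (e ▸ h1))]; exact (hdn u h1).symm
          · rw [if_neg (show u ≠ z from fun e => hzF (e ▸ h1)), if_neg (show v ≠ z from fun e => hzF (e ▸ h2))]; exact lift_le_lift
  · -- non separating at last
    rintro ⟨u, ⟨f, hf, rfl⟩, u', ⟨f', hf', rfl⟩, hne, hoff, hlt⟩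
    have hall : ∀ x : Fin n, f x ≤ f' x := by
      intro x
      have := hoff x.castSucc (Fin.castSucc_lt_last x).ne
      simpa [lift, Fin.snoc_castSucc] using this
    have : f i ≤ f' i := hall i
    have hlt' : f' i < f i := by
      simpa [lift, Fin.snoc_last] using hlt
    exact absurd hlt' (not_lt.2 this)
  · -- binary at last
    rintro u ⟨f, hf, rfl⟩
    have : lift i f (Fin.last n) = f i := by simp [lift, Fin.snoc_last]
    rw [this]
    exact hbin f hf


end

lemma exists_saturated (P : Type) [PartialOrder P] (hP : Nonempty P)
    (α : Type) [PartialOrder α] [Fintype α] [DecidableEq α] :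
    ∃ F : Set α, PSaturated P F := by
  classical
  set S : Finset (Finset α) := Finset.univ.filter (fun s : Finset α => PFree P (↑s : Set α))
    with hS
  have hSne : S.Nonempty := by
    refine ⟨∅, ?_⟩
    rw [hS, Finset.mem_filter]
    refine ⟨Finset.mem_univ _, ?_⟩
    rintro ⟨φ, -, hm, -⟩
    obtain ⟨x⟩ := hP
    simpa using hm x
  have hNne : (S.image Finset.card).Nonempty := hSne.image _
  set N := (S.image Finset.card).max' hNne with hN
  obtain ⟨s, hsS, hscard⟩ := Finset.mem_image.1 ((S.image Finset.card).max'_mem hNne)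
  have hfree : PFree P (↑s : Set α) := (Finset.mem_filter.1 hsS).2
  refine ⟨↑s, hfree, ?_⟩
  intro g hg
  by_contra hcopy
  have hfree2 : PFree P (↑(insert g s) : Set α) := by
    rw [Finset.coe_insert]
    exact hcopy
  have hmem : insert g s ∈ S := by
    rw [hS, Finset.mem_filter]; exact ⟨Finset.mem_univ _, hfree2⟩
  have hcard : (insert g s).card = s.card + 1 := Finset.card_insert_of_notMem (by
    simpa using hg)
  have hle : (insert g s).card ≤ N :=
    Finset.le_max' _ _ (Finset.mem_image_of_mem _ hmem)
  omega

lemma sep_count {t n : ℕ} (F : Set (Fin n → Fin t)) (hsep : ∀ i, Separating F i) :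
    n ≤ F.ncard * F.ncard := by
  classical
  choose f hf f' hf' hne hle hlt using hsep
  have hWinj : Function.Injective
      (fun i : Fin n => ((⟨f i, hf i⟩ : F), (⟨f' i, hf' i⟩ : F))) := by
    intro i j he
    by_contra hij
    obtain ⟨e1, e2⟩ := Prod.ext_iff.mp he
    have e1' : f i = f j := by simpa using e1
    have e2' : f' i = f' j := by simpa using e2
    have h3 := hle j i hij
    rw [← e1', ← e2'] at h3
    exact absurd h3 (not_le.2 (hlt i))
  have key : Nat.card (Fin n) ≤ Nat.card (↥F × ↥F) := Nat.card_le_card_of_injective _ hWinj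
  rw [Nat.card_eq_fintype_card, Fintype.card_fin, Nat.card_prod,
    Nat.card_coe_set_eq] at key
  exact key

lemma satStar_le_pow {t n : ℕ} (P : Type) [PartialOrder P] : satStar t n P ≤ t ^ n := by
  classical
  unfold satStar
  by_cases hS : {m | ∃ F : Set (Fin n → Fin t), PSaturated P F ∧ F.ncard = m}.Nonempty
  · obtain ⟨m, F, hF, rfl⟩ := hS
    refine le_trans (Nat.sInf_le ⟨F, hF, rfl⟩) ?_
    calc F.ncard ≤ (Set.univ : Set (Fin n → Fin t)).ncard :=
          Set.ncard_le_ncard (Set.subset_univ _) Set.finite_univ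
    _ = t ^ n := by
        rw [Set.ncard_univ, Nat.card_eq_fintype_card, Fintype.card_fun,
          Fintype.card_fin, Fintype.card_fin]
  · rw [Set.not_nonempty_iff_eq_empty.1 hS, Nat.sInf_empty]
    exact Nat.zero_le _


end Stmt13Aux

open Stmt13Aux in
theorem stmt13 (t : ℕ) (ht : 2 ≤ t) (P : Type) [PartialOrder P] [Finite P]
    (hembed : ∃ n₀ : ℕ, InducedCopy P (Set.univ : Set (Fin n₀ → Fin t))) :
    (∃ C : ℕ, ∀ n : ℕ, satStar t n P ≤ C) ∨
    (∃ c : ℝ, 0 < c ∧ ∀ᶠ n : ℕ in atTop, c * Real.sqrt n ≤ (satStar t n P : ℝ)) := by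
  classical
  by_cases hP : Nonempty P
  · by_cases hQ : ∃ (n₁ : ℕ) (F : Set (Fin n₁ → Fin t)) (i : Fin n₁),
        PSaturated P F ∧ ¬ Separating F i
    · left
      obtain ⟨n₁, F₁, i₁, hsat₁, hns₁⟩ := hQ
      obtain ⟨G₀, hG₀sat, hG₀ns, hG₀bin, hG₀card⟩ := round_lemma ht P hsat₁ hns₁
      have grow : ∀ k, ∃ G : Set (Fin (n₁ + k) → Fin t),
          PSaturated P G ∧ (∃ j, ¬ Separating G j ∧
            (∀ u ∈ G, (u j).val = 0 ∨ (u j).val + 1 = t)) ∧ G.ncard = F₁.ncard := by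
        intro k
        induction k with
        | zero => exact ⟨G₀, hG₀sat, ⟨i₁, hG₀ns, hG₀bin⟩, hG₀card⟩
        | succ k ih =>
          obtain ⟨G, hGsat, ⟨j, hGns, hGbin⟩, hGcard⟩ := ih
          obtain ⟨hs, hn, hb, hc⟩ := lift_lemma ht P hGsat hGns hGbin
          exact ⟨lift j '' G, hs, ⟨Fin.last _, hn, hb⟩, hc.trans hGcard⟩
      refine ⟨max F₁.ncard (t ^ n₁), fun n => ?_⟩
      by_cases hn : n₁ ≤ n
      · obtain ⟨k, rfl⟩ : ∃ k, n = n₁ + k := ⟨n - n₁, by omega⟩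
        obtain ⟨G, hGsat, -, hGcard⟩ := grow k
        calc satStar t (n₁+k) P ≤ G.ncard := Nat.sInf_le ⟨G, hGsat, rfl⟩
        _ = F₁.ncard := hGcard
        _ ≤ max F₁.ncard (t ^ n₁) := le_max_left _ _
      · refine le_trans (satStar_le_pow P) (le_trans ?_ (le_max_right _ _))
        exact Nat.pow_le_pow_right (by omega) (by omega)
    · right
      push_neg at hQ
      refine ⟨1, one_pos, Eventually.of_forall fun n => ?_⟩
      have hne : {m | ∃ F : Set (Fin n → Fin t), PSaturated P F ∧ F.ncard = m}.Nonempty := by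
        obtain ⟨F, hF⟩ := exists_saturated P hP (Fin n → Fin t)
        exact ⟨F.ncard, F, hF, rfl⟩
      have hmem : satStar t n P ∈
          {m | ∃ F : Set (Fin n → Fin t), PSaturated P F ∧ F.ncard = m} := Nat.sInf_mem hne
      obtain ⟨F, hFsat, hFcard⟩ := hmem
      have hcount : n ≤ satStar t n P * satStar t n P := by
        have := sep_count F (fun i => hQ n F i hFsat)
        rwa [hFcard] at this
      rw [one_mul]
      have h2 : (n : ℝ) ≤ (satStar t n P : ℝ)^2 := by
        rw [sq]; exact_mod_cast hcount
      calc Real.sqrt n ≤ Real.sqrt ((satStar t n P : ℝ)^2) := Real.sqrt_le_sqrt h2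
      _ = (satStar t n P : ℝ) := Real.sqrt_sq (by positivity)
  · left
    refine ⟨0, fun n => ?_⟩
    have hempty : {m | ∃ F : Set (Fin n → Fin t), PSaturated P F ∧ F.ncard = m} = ∅ := by
      ext m
      simp only [Set.mem_setOf_eq, Set.mem_empty_iff_false, iff_false]
      rintro ⟨F, ⟨hfree, -⟩, -⟩
      have he : IsEmpty P := not_nonempty_iff.1 hP
      exact hfree ⟨fun x => he.elim x, fun a => he.elim a, fun x => he.elim x,
        fun x => he.elim x⟩
    show sInf _ ≤ 0
    rw [hempty, Nat.sInf_empty]
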